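/- Let W be a finite-dimensional real normed vector space and let ρ be a representation of ℝ⁺ by linear automorphisms of W such that for every w ∈ W the map λ ↦ ρ(λ)w is differentiable on (0,∞). Define the (linear) generator A : W → W by A w = (d/dλ)|_{λ=1} ρ(λ)w. If F ∈ W has almost homogeneous degree k ∈ ℝ and order l ∈ ℕ with respect to the representation F_λ = ρ(λ)F, then (A − k·id)^{l+1} F = 0. -/

import Mathlib

/-- `AlmostHom act k l F` : `F` has almost homogeneous degree `k` and order `l`
with respect to the linear representation `act` of `ℝ⁺`. -/
def AlmostHom {W : Type*} [AddCommGroup W] [Module ℝ W]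
    (act : ℝ → W →ₗ[ℝ] W) (k : ℝ) : ℕ → W → Prop
  | 0, F => ∀ μ : ℝ, 0 < μ → act μ F = μ ^ k • F
  | l + 1, F => ∃ G : Fin (l + 1) → W,
      (∀ j : Fin (l + 1), AlmostHom act k (l - (j : ℕ)) (G j)) ∧
      ∀ μ : ℝ, 0 < μ → act μ F =
        μ ^ k • F + μ ^ k • ∑ j : Fin (l + 1), (Real.log μ ^ ((j : ℕ) + 1)) • G j
  termination_by l _ => l
  decreasing_by omega

/-- If `W` is a finite-dimensional real normed vector space, `ρ` a representation of `ℝ⁺`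
by linear automorphisms of `W` with `λ ↦ ρ(λ)w` differentiable on `(0,∞)`, and
`A w = (d/dλ)|_{λ=1} ρ(λ)w` the generator, then any `F` of almost homogeneous degree `k`
and order `l` satisfies `(A - k·id)^{l+1} F = 0`. -/
theorem almostHom_infinitesimal {W : Type*} [NormedAddCommGroup W] [NormedSpace ℝ W]
    [FiniteDimensional ℝ W]
    (ρ : ℝ → W →ₗ[ℝ] W)
    (hone : ρ 1 = LinearMap.id)
    (hmul : ∀ lam mu : ℝ, 0 < lam → 0 < mu → ρ (lam * mu) = (ρ lam).comp (ρ mu))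
    (hauto : ∀ lam : ℝ, 0 < lam → Function.Bijective (ρ lam))
    (hdiff : ∀ w : W, DifferentiableOn ℝ (fun lam : ℝ => ρ lam w) (Set.Ioi (0 : ℝ)))
    (k : ℝ) (l : ℕ) (F : W)
    (hF : AlmostHom ρ k l F) :
    (fun w : W => deriv (fun lam : ℝ => ρ lam w) 1 - k • w)^[l + 1] F = 0 := by
  set B : W → W := fun w : W => deriv (fun lam : ℝ => ρ lam w) 1 - k • w with hB
  have hnhds : ∀ᶠ μ in nhds (1:ℝ), μ ∈ Set.Ioi (0:ℝ) :=
    isOpen_Ioi.eventually_mem (by norm_num)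
  have hrpow : HasDerivAt (fun μ : ℝ => μ ^ k) k 1 := by
    have := Real.hasDerivAt_rpow_const (x := (1:ℝ)) (p := k) (Or.inl one_ne_zero)
    simpa using this
  induction l generalizing F with
  | zero =>
    rw [AlmostHom] at hF
    have hF' := hF
    have hd : HasDerivAt (fun lam : ℝ => ρ lam F) (k • F) 1 := by
      refine (hrpow.smul_const F).congr_of_eventuallyEq ?_
      filter_upwards [hnhds] with μ hμ
      exact hF' μ hμ
    simp [hB, hd.deriv]
  | succ l ih =>
    rw [AlmostHom] at hF
    obtain ⟨G, hG, hformula⟩ := hF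
    have hlog : HasDerivAt Real.log 1 1 := by
      simpa using Real.hasDerivAt_log one_ne_zero
    have hS : HasDerivAt
        (fun μ : ℝ => ∑ j : Fin (l + 1), (Real.log μ ^ ((j : ℕ) + 1)) • G j)
        (∑ j : Fin (l + 1), ((((j : ℕ) : ℝ) + 1) * (0:ℝ) ^ (j : ℕ)) • G j) 1 := by
      refine HasDerivAt.fun_sum fun j _ => ?_
      have := (hlog.pow ((j : ℕ) + 1)).smul_const (G j)
      simpa using this
    have hS1 : (∑ j : Fin (l + 1), (Real.log (1:ℝ) ^ ((j : ℕ) + 1)) • G j) = 0 := by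
      simp
    have hd : HasDerivAt (fun lam : ℝ => ρ lam F)
        (k • F + ∑ j : Fin (l + 1), ((((j : ℕ) : ℝ) + 1) * (0:ℝ) ^ (j : ℕ)) • G j) 1 := by
      have h2 := (hrpow.smul_const F).add (hrpow.smul hS)
      refine (h2.congr_of_eventuallyEq ?_).congr_deriv ?_
      · filter_upwards [hnhds] with μ hμ
        exact hformula μ hμ
      · simp [hS1]
    have hkey : B F = G 0 := by
      have : deriv (fun lam : ℝ => ρ lam F) 1
          = k • F + ∑ j : Fin (l + 1), ((((j : ℕ) : ℝ) + 1) * (0:ℝ) ^ (j : ℕ)) • G j := hd.deriv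
      rw [hB]
      simp only [this]
      rw [Fintype.sum_eq_single (0 : Fin (l + 1)) (fun j hj => by
        have : (j : ℕ) ≠ 0 := by
          exact fun h => hj (Fin.ext (by simpa using h))
        simp [zero_pow this])]
      simp
    have h0 : AlmostHom ρ k l (G 0) := by simpa using hG 0
    rw [Function.iterate_succ_apply, show B F = G 0 from hkey]
    exact ih (G 0) h0
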